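/- Suppose a block k-sparse vector a with s-sparse blocks satisfies x = D a, and suppose conditions (i) ρ_c(Q D_{Ḡ₀}) < α ≤ 1, (ii) ‖H D_{Ḡ₀}‖_{1,1} < γ with γ ≤ 1 + λ(1−α)/(√g(1−λ)), and (iii) ‖H D_{T₀}‖_{1,1} < 1 hold, where H is the Moore–Penrose pseudo-inverse of D_{S₀} and Q the oblique pseudo-inverse annihilating D_{T₀}. Then for every a' ≠ a with x = D a', one has λ·ψ_𝒢(a) + (1−λ)·‖a‖₁ < λ·ψ_𝒢(a') + (1−λ)·‖a'‖₁; that is, a is the unique minimizer of the noiseless HiLasso program. -/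

import Mathlib

noncomputable def l2 {α : Type*} [Fintype α] (x : α → ℝ) : ℝ := Real.sqrt (∑ i, x i ^ 2)
noncomputable def l1 {α : Type*} [Fintype α] (x : α → ℝ) : ℝ := ∑ i, |x i|

/-- Spectral norm of a real matrix. -/
noncomputable def spec {α β : Type*} [Fintype α] [Fintype β] (Z : Matrix α β ℝ) : ℝ :=
  sSup {x | ∃ v : β → ℝ, l2 v = 1 ∧ x = l2 (Z.mulVec v)}

/-- Block spectral norm with row partition `pr` and column partition `pc`. -/
noncomputable def rhoc {α β κ₁ κ₂ : Type*} [Fintype α] [Fintype β]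
    [Fintype κ₁] [Fintype κ₂] [DecidableEq κ₁] [DecidableEq κ₂]
    (Z : Matrix α β ℝ) (pr : α → κ₁) (pc : β → κ₂) : ℝ :=
  sSup {x | ∃ F : κ₂, x = ∑ E : κ₁,
    spec (Z.submatrix (Subtype.val : {i // pr i = E} → α) (Subtype.val : {j // pc j = F} → β))}

/-- Maximum column `ℓ¹` norm. -/
noncomputable def norm11 {α β : Type*} [Fintype α] [Fintype β] (W : Matrix α β ℝ) : ℝ :=
  sSup {x | ∃ j : β, x = ∑ i, |W i j|}

/-- Group regularizer `ψ_𝒢(a) = Σ_G ‖a_G‖₂`. -/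
noncomputable def psiG {q g : ℕ} (a : Fin q × Fin g → ℝ) : ℝ :=
  ∑ G : Fin q, l2 (fun b => a (G, b))

section infra
variable {α β : Type*} [Fintype α] [Fintype β]

lemma l2_nonneg (x : α → ℝ) : 0 ≤ l2 x := Real.sqrt_nonneg _

lemma l2_sq (x : α → ℝ) : l2 x ^ 2 = ∑ i, x i ^ 2 :=
  Real.sq_sqrt (Finset.sum_nonneg fun _ _ => sq_nonneg _)

lemma l1_nonneg (x : α → ℝ) : 0 ≤ l1 x := Finset.sum_nonneg fun _ _ => abs_nonneg _

lemma l2_eq_zero {x : α → ℝ} (h : l2 x = 0) : ∀ i, x i = 0 := by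
  intro i
  have h0 : ∑ j, x j ^ 2 = 0 :=
    (Real.sqrt_eq_zero (Finset.sum_nonneg fun i _ => sq_nonneg (x i))).mp h
  have := (Finset.sum_eq_zero_iff_of_nonneg (fun i _ => sq_nonneg (x i))).mp h0 i (Finset.mem_univ i)
  exact pow_eq_zero_iff (by norm_num) |>.mp this

lemma inner_le_l2_mul_l2 (x y : α → ℝ) : ∑ i, x i * y i ≤ l2 x * l2 y := by
  have h2 : (∑ i, x i * y i) ^ 2 ≤ (l2 x * l2 y) ^ 2 := by
    rw [mul_pow, l2_sq, l2_sq]; exact Finset.sum_mul_sq_le_sq_mul_sq Finset.univ x y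
  calc ∑ i, x i * y i ≤ |∑ i, x i * y i| := le_abs_self _
    _ = Real.sqrt ((∑ i, x i * y i) ^ 2) := (Real.sqrt_sq_eq_abs _).symm
    _ ≤ Real.sqrt ((l2 x * l2 y) ^ 2) := Real.sqrt_le_sqrt h2
    _ = l2 x * l2 y := Real.sqrt_sq (mul_nonneg (l2_nonneg x) (l2_nonneg y))

lemma l2_add_le (x y : α → ℝ) : l2 (fun i => x i + y i) ≤ l2 x + l2 y := by
  have expand : ∑ i, (x i + y i) ^ 2 = (∑ i, x i ^ 2) + 2 * (∑ i, x i * y i) + ∑ i, y i ^ 2 := by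
    simp [add_sq, Finset.sum_add_distrib, Finset.mul_sum, mul_assoc]
  have hs : ∑ i, (x i + y i) ^ 2 ≤ (l2 x + l2 y) ^ 2 := by
    nlinarith [inner_le_l2_mul_l2 x y, l2_sq x, l2_sq y, l2_nonneg x, l2_nonneg y]
  calc l2 (fun i => x i + y i) = Real.sqrt (∑ i, (x i + y i)^2) := rfl
    _ ≤ Real.sqrt ((l2 x + l2 y)^2) := Real.sqrt_le_sqrt hs
    _ = l2 x + l2 y := Real.sqrt_sq (add_nonneg (l2_nonneg x) (l2_nonneg y))

lemma l2_sub_le (x y : α → ℝ) : l2 x - l2 y ≤ l2 (fun i => x i + y i) := by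
  have h := l2_add_le (fun i => x i + y i) (fun i => - y i)
  have h1 : l2 (fun i => (x i + y i) + (- y i)) = l2 x := by simp [l2]
  have h2 : l2 (fun i => - y i) = l2 y := by simp [l2]
  rw [h1, h2] at h; linarith

lemma l2_neg (x : α → ℝ) : l2 (fun i => - x i) = l2 x := by simp [l2]

lemma l2_smul (c : ℝ) (x : α → ℝ) : l2 (fun i => c * x i) = |c| * l2 x := by
  simp only [l2, mul_pow, ← Finset.mul_sum]
  rw [Real.sqrt_mul (sq_nonneg c), Real.sqrt_sq_eq_abs]

lemma l1_le_sqrt_card_mul_l2 (x : α → ℝ) :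
    l1 x ≤ Real.sqrt (Fintype.card α) * l2 x := by
  have h := inner_le_l2_mul_l2 (fun _ : α => (1:ℝ)) (fun i => |x i|)
  have h1 : l2 (fun _ : α => (1:ℝ)) = Real.sqrt (Fintype.card α) := by simp [l2]
  have h2 : l2 (fun i => |x i|) = l2 x := by simp [l2, sq_abs]
  simpa [l1, h1, h2] using h

omit [Fintype β] in
lemma l2_sum_le {s : Finset β} (f : β → α → ℝ) :
    l2 (fun i => ∑ j ∈ s, f j i) ≤ ∑ j ∈ s, l2 (f j) := by
  classical
  induction s using Finset.induction with
  | empty => simp [l2]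
  | insert b t hx ih =>
      calc l2 (fun i => ∑ j ∈ insert b t, f j i)
          = l2 (fun i => f b i + ∑ j ∈ t, f j i) := by
            simp [Finset.sum_insert hx]
        _ ≤ l2 (f b) + l2 (fun i => ∑ j ∈ t, f j i) := l2_add_le _ _
        _ ≤ l2 (f b) + ∑ j ∈ t, l2 (f j) := by linarith [ih]
        _ = ∑ j ∈ insert b t, l2 (f j) := by rw [Finset.sum_insert hx]

lemma l2_restrict_le (p : α → Prop) [DecidablePred p] (x : α → ℝ) :
    l2 (fun i : {i // p i} => x i.val) ≤ l2 x := by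
  apply Real.sqrt_le_sqrt
  rw [← Finset.sum_subtype (Finset.univ.filter p) (by simp) (fun i => x i ^ 2)]
  exact Finset.sum_le_sum_of_subset_of_nonneg (Finset.filter_subset _ _)
    (fun i _ _ => sq_nonneg _)

lemma l2_restrict_eq (p : α → Prop) [DecidablePred p] (x : α → ℝ)
    (h : ∀ i, ¬ p i → x i = 0) :
    l2 (fun i : {i // p i} => x i.val) = l2 x := by
  unfold l2; congr 1
  rw [← Finset.sum_subtype (Finset.univ.filter p) (by simp) (fun i => x i ^ 2)]
  apply Finset.sum_subset (Finset.filter_subset _ _)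
  intro i _ hni
  simp only [Finset.mem_filter, Finset.mem_univ, true_and] at hni
  rw [h i hni]; ring

lemma l2_comp_equiv {γ : Type*} [Fintype γ] (e : γ ≃ α) (x : α → ℝ) :
    l2 (fun a => x (e a)) = l2 x :=
  congrArg Real.sqrt (Fintype.sum_equiv e _ _ (fun _ => rfl))

lemma l2_of_isEmpty [IsEmpty α] (x : α → ℝ) : l2 x = 0 := by simp [l2]

lemma range_bddAbove {γ : Type*} [Fintype γ] (f : γ → ℝ) :
    BddAbove {x | ∃ j : γ, x = f j} := by
  have : {x | ∃ j : γ, x = f j} = Set.range f := by ext x; simp [eq_comm]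
  rw [this]; exact (Set.finite_range f).bddAbove

lemma le_norm11 (W : Matrix α β ℝ) (j : β) : ∑ i, |W i j| ≤ norm11 W :=
  le_csSup (range_bddAbove _) ⟨j, rfl⟩

lemma norm11_bound (W : Matrix α β ℝ) (v : β → ℝ) :
    l1 (W.mulVec v) ≤ norm11 W * l1 v := by
  calc l1 (W.mulVec v) = ∑ i, |∑ j, W i j * v j| := by
        simp [l1, Matrix.mulVec, dotProduct]
    _ ≤ ∑ i, ∑ j, |W i j * v j| := Finset.sum_le_sum fun i _ => Finset.abs_sum_le_sum_abs _ _
    _ = ∑ j, ∑ i, |W i j| * |v j| := by rw [Finset.sum_comm]; simp [abs_mul]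
    _ = ∑ j, (∑ i, |W i j|) * |v j| := by simp [Finset.sum_mul]
    _ ≤ ∑ j, norm11 W * |v j| :=
        Finset.sum_le_sum fun j _ => mul_le_mul_of_nonneg_right (le_norm11 W j) (abs_nonneg _)
    _ = norm11 W * l1 v := by rw [← Finset.mul_sum]; rfl

lemma spec_bddAbove (Z : Matrix α β ℝ) :
    BddAbove {x | ∃ v : β → ℝ, l2 v = 1 ∧ x = l2 (Z.mulVec v)} := by
  refine ⟨Real.sqrt (∑ i, ∑ j, Z i j ^ 2), ?_⟩
  rintro x ⟨v, hv, rfl⟩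
  have hb : ∑ i, (Z.mulVec v) i ^ 2 ≤ ∑ i, ∑ j, Z i j ^ 2 := by
    apply Finset.sum_le_sum
    intro i _
    have hv2 : ∑ j, v j ^ 2 = 1 := by
      have := l2_sq v; rw [hv] at this; simpa using this.symm
    calc (Z.mulVec v) i ^ 2 = (∑ j, Z i j * v j) ^ 2 := by
          simp [Matrix.mulVec, dotProduct]
      _ ≤ (∑ j, Z i j ^ 2) * ∑ j, v j ^ 2 := Finset.sum_mul_sq_le_sq_mul_sq _ _ _
      _ = ∑ j, Z i j ^ 2 := by rw [hv2, mul_one]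
  exact Real.sqrt_le_sqrt hb

lemma spec_bound (Z : Matrix α β ℝ) (v : β → ℝ) :
    l2 (Z.mulVec v) ≤ spec Z * l2 v := by
  by_cases hv : ∀ j, v j = 0
  · have : v = 0 := funext hv
    subst this
    simp [Matrix.mulVec_zero, l2, Real.sqrt_eq_zero']
  · push_neg at hv
    obtain ⟨j0, hj0⟩ := hv
    have hvpos : 0 < l2 v := by
      rcases lt_or_eq_of_le (l2_nonneg v) with h | h
      · exact h
      · exact absurd (l2_eq_zero h.symm j0) hj0
    set t := l2 v with ht
    set u : β → ℝ := fun j => t⁻¹ * v j with hu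
    have hu1 : l2 u = 1 := by
      rw [hu, l2_smul, abs_of_pos (inv_pos.mpr hvpos), inv_mul_cancel₀ (ne_of_gt hvpos)]
    have hle : l2 (Z.mulVec u) ≤ spec Z :=
      le_csSup (spec_bddAbove Z) ⟨u, hu1, rfl⟩
    have hveq : v = fun j => t * u j := by
      funext j; rw [hu]; field_simp
    have heq : l2 (Z.mulVec v) = t * l2 (Z.mulVec u) := by
      conv_lhs => rw [hveq]
      have : Z.mulVec (fun j => t * u j) = fun i => t * (Z.mulVec u) i := by
        funext i
        simp only [Matrix.mulVec, dotProduct, Finset.mul_sum]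
        congr 1; funext j; ring
      rw [this, l2_smul, abs_of_pos hvpos]
    rw [heq, mul_comm (spec Z) t]
    exact mul_le_mul_of_nonneg_left hle (le_of_lt hvpos)

variable {κ₁ κ₂ : Type*} [Fintype κ₁] [Fintype κ₂] [DecidableEq κ₁] [DecidableEq κ₂]

lemma rhoc_bound (Z : Matrix α β ℝ) (pr : α → κ₁) (pc : β → κ₂) (v : β → ℝ) :
    ∑ E : κ₁, l2 (fun i : {i // pr i = E} => Z.mulVec v i.val) ≤
      rhoc Z pr pc * ∑ F : κ₂, l2 (fun j : {j // pc j = F} => v j.val) := by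
  have key : ∀ E : κ₁, l2 (fun i : {i // pr i = E} => Z.mulVec v i.val) ≤
      ∑ F : κ₂, spec (Z.submatrix (Subtype.val : {i // pr i = E} → α)
        (Subtype.val : {j // pc j = F} → β)) * l2 (fun j : {j // pc j = F} => v j.val) := by
    intro E
    have hdecomp : (fun i : {i // pr i = E} => Z.mulVec v i.val) =
        fun i : {i // pr i = E} => ∑ F : κ₂,
          ((Z.submatrix (Subtype.val : {i // pr i = E} → α)
            (Subtype.val : {j // pc j = F} → β)).mulVec (fun j : {j // pc j = F} => v j.val)) i := by
      funext i
      simp only [Matrix.mulVec, dotProduct, Matrix.submatrix_apply]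
      exact (Fintype.sum_fiberwise pc (fun j => Z i.val j * v j)).symm
    rw [hdecomp]
    calc l2 (fun i : {i // pr i = E} => ∑ F : κ₂, _) ≤ _ :=
      l2_sum_le (fun F => ((Z.submatrix _ (Subtype.val : {j // pc j = F} → β)).mulVec
        (fun j : {j // pc j = F} => v j.val)))
      _ ≤ _ := Finset.sum_le_sum fun F _ => spec_bound _ _
  calc ∑ E : κ₁, l2 (fun i : {i // pr i = E} => Z.mulVec v i.val)
      ≤ ∑ E : κ₁, ∑ F : κ₂, spec (Z.submatrix _ _) * l2 (fun j : {j // pc j = F} => v j.val) :=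
        Finset.sum_le_sum fun E _ => key E
    _ = ∑ F : κ₂, (∑ E : κ₁, spec (Z.submatrix (Subtype.val : {i // pr i = E} → α)
          (Subtype.val : {j // pc j = F} → β))) * l2 (fun j : {j // pc j = F} => v j.val) := by
        rw [Finset.sum_comm]; simp [Finset.sum_mul]
    _ ≤ ∑ F : κ₂, rhoc Z pr pc * l2 (fun j : {j // pc j = F} => v j.val) :=
        Finset.sum_le_sum fun F _ => mul_le_mul_of_nonneg_right
          (le_csSup (range_bddAbove _) ⟨F, rfl⟩) (l2_nonneg _)
    _ = rhoc Z pr pc * ∑ F : κ₂, l2 (fun j : {j // pc j = F} => v j.val) := by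
        rw [← Finset.mul_sum]

end infra

section parts
variable {q g k s : ℕ}

lemma sum_split (f : Fin q × Fin g → ℝ) :
    ∑ x, f x = (∑ x : {x : Fin q × Fin g // (x.1 : ℕ) < k ∧ (x.2 : ℕ) < s}, f x.val) +
      (∑ x : {x : Fin q × Fin g // (x.1 : ℕ) < k ∧ s ≤ (x.2 : ℕ)}, f x.val) +
      (∑ x : {x : Fin q × Fin g // k ≤ (x.1 : ℕ)}, f x.val) := by
  classical
  have e1 : ∀ (p : Fin q × Fin g → Prop) [DecidablePred p],
      (∑ x : Subtype p, f x.val) = ∑ x ∈ Finset.univ.filter p, f x := by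
    intro p _
    exact (Finset.sum_subtype _ (by simp) f).symm
  rw [e1, e1, e1]
  have h1 := Finset.sum_filter_add_sum_filter_not Finset.univ
    (fun x : Fin q × Fin g => (x.1 : ℕ) < k ∧ (x.2 : ℕ) < s) f
  have h2 := Finset.sum_filter_add_sum_filter_not
    (Finset.univ.filter (fun x : Fin q × Fin g => ¬((x.1 : ℕ) < k ∧ (x.2 : ℕ) < s)))
    (fun x : Fin q × Fin g => (x.1 : ℕ) < k ∧ s ≤ (x.2 : ℕ)) f
  have e2 : (Finset.univ.filter (fun x : Fin q × Fin g => ¬((x.1 : ℕ) < k ∧ (x.2 : ℕ) < s))).filter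
      (fun x => (x.1 : ℕ) < k ∧ s ≤ (x.2 : ℕ)) =
      Finset.univ.filter (fun x : Fin q × Fin g => (x.1 : ℕ) < k ∧ s ≤ (x.2 : ℕ)) := by
    ext x; simp only [Finset.mem_filter, Finset.mem_univ, true_and]; omega
  have e3 : (Finset.univ.filter (fun x : Fin q × Fin g => ¬((x.1 : ℕ) < k ∧ (x.2 : ℕ) < s))).filter
      (fun x => ¬((x.1 : ℕ) < k ∧ s ≤ (x.2 : ℕ))) =
      Finset.univ.filter (fun x : Fin q × Fin g => k ≤ (x.1 : ℕ)) := by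
    ext x; simp only [Finset.mem_filter, Finset.mem_univ, true_and]; omega
  rw [e2, e3] at h2
  linarith

/-- The inactive-group block for a fixed group `E ≥ k` is a full group. -/
def equivG (E : Fin q) (hE : k ≤ (E : ℕ)) :
    Fin g ≃ {x : {x : Fin q × Fin g // k ≤ (x.1 : ℕ)} // x.val.1 = E} where
  toFun b := ⟨⟨(E, b), hE⟩, rfl⟩
  invFun x := x.val.val.2
  left_inv b := rfl
  right_inv := by rintro ⟨⟨⟨e1, b⟩, hk⟩, hE'⟩; simp only at hE'; subst hE'; rfl

/-- The active block for a fixed group `E < k` matches the first `s` entries. -/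
def equivS (E : Fin q) (hE : (E : ℕ) < k) :
    {b : Fin g // (b : ℕ) < s} ≃
      {x : {x : Fin q × Fin g // (x.1 : ℕ) < k ∧ (x.2 : ℕ) < s} // x.val.1 = E} where
  toFun b := ⟨⟨(E, b.val), ⟨hE, b.prop⟩⟩, rfl⟩
  invFun x := ⟨x.val.val.2, x.val.prop.2⟩
  left_inv b := rfl
  right_inv := by rintro ⟨⟨⟨e1, b⟩, hk⟩, hE'⟩; simp only at hE'; subst hE'; rfl

end parts

lemma per_E {q g k s : ℕ} (a a' δ : Fin q × Fin g → ℝ)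
    (hδeq : ∀ x, δ x = a' x - a x)
    (ha0 : ∀ x : Fin q × Fin g, ¬((x.1 : ℕ) < k ∧ (x.2 : ℕ) < s) → a x = 0) (E : Fin q) :
    l2 (fun b => a (E, b)) +
      (l2 (fun x : {x : {x : Fin q × Fin g // k ≤ (x.1 : ℕ)} // x.val.1 = E} => δ x.val.val) -
       l2 (fun x : {x : {x : Fin q × Fin g // (x.1 : ℕ) < k ∧ (x.2 : ℕ) < s} // x.val.1 = E} =>
         δ x.val.val)) ≤ l2 (fun b => a' (E, b)) := by
  by_cases hE : (E : ℕ) < k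
  · haveI : IsEmpty {x : {x : Fin q × Fin g // k ≤ (x.1 : ℕ)} // x.val.1 = E} := by
      constructor
      rintro ⟨⟨⟨e1, b⟩, hk⟩, hE'⟩
      have he : e1 = E := hE'
      subst he
      simp at hk
      omega
    rw [l2_of_isEmpty (fun x : {x : {x : Fin q × Fin g // k ≤ (x.1 : ℕ)} // x.val.1 = E} =>
      δ x.val.val)]
    have h1 : l2 (fun b : {b : Fin g // (b : ℕ) < s} => a (E, b.val)) = l2 (fun b => a (E, b)) :=
      l2_restrict_eq (fun b : Fin g => (b : ℕ) < s) (fun b => a (E, b))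
        (fun b hb => ha0 (E, b) (fun h => hb h.2))
    have h2 : l2 (fun b : {b : Fin g // (b : ℕ) < s} => a' (E, b.val)) ≤ l2 (fun b => a' (E, b)) :=
      l2_restrict_le (fun b : Fin g => (b : ℕ) < s) (fun b => a' (E, b))
    have h3 := l2_sub_le (fun b : {b : Fin g // (b : ℕ) < s} => a (E, b.val))
      (fun b : {b : Fin g // (b : ℕ) < s} => δ (E, b.val))
    have h4 : (fun b : {b : Fin g // (b : ℕ) < s} => a (E, b.val) + δ (E, b.val)) =
        fun b : {b : Fin g // (b : ℕ) < s} => a' (E, b.val) := by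
      funext b; rw [hδeq]; ring
    rw [h4] at h3
    have h5 : l2 (fun b : {b : Fin g // (b : ℕ) < s} => δ (E, b.val)) =
        l2 (fun x : {x : {x : Fin q × Fin g // (x.1 : ℕ) < k ∧ (x.2 : ℕ) < s} // x.val.1 = E} =>
          δ x.val.val) :=
      l2_comp_equiv (equivS E hE) (fun x => δ x.val.val)
    linarith
  · push_neg at hE
    haveI : IsEmpty {x : {x : Fin q × Fin g // (x.1 : ℕ) < k ∧ (x.2 : ℕ) < s} // x.val.1 = E} := by
      constructor
      rintro ⟨⟨⟨e1, b⟩, hk1, hk2⟩, hE'⟩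
      have he : e1 = E := hE'
      subst he
      simp at hk1
      omega
    rw [l2_of_isEmpty
      (fun x : {x : {x : Fin q × Fin g // (x.1 : ℕ) < k ∧ (x.2 : ℕ) < s} // x.val.1 = E} =>
        δ x.val.val)]
    have ha : l2 (fun b => a (E, b)) = 0 := by
      have hz : (fun b : Fin g => a (E, b)) = fun _ => (0:ℝ) :=
        funext fun b => ha0 (E, b) (fun h => by simp at h; omega)
      rw [hz]; simp [l2]
    have h6 : l2 (fun x : {x : {x : Fin q × Fin g // k ≤ (x.1 : ℕ)} // x.val.1 = E} =>
        δ x.val.val) = l2 (fun b : Fin g => a' (E, b)) := by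
      rw [← l2_comp_equiv (equivG E hE) (fun x => δ x.val.val)]
      congr 1
      funext b
      show δ (E, b) = a' (E, b)
      rw [hδeq, ha0 (E, b) (fun h => by simp at h; omega)]; ring
    rw [ha, h6]
    linarith

set_option maxHeartbeats 2000000 in
/-- Theorem 1 (HiLasso recovery).  The dictionary `D` has `q` groups of `g` columns;
the active groups are the first `k` and within each active group the active entries are
the first `s`.  Under conditions (i)–(iii) on the oblique pseudo-inverse `Q` and the
Moore–Penrose pseudo-inverse `H`, the true code `a` is the unique minimizer of the
noiseless HiLasso program. -/
theorem hilasso_recovery {m q g k s : ℕ}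
    (D : Matrix (Fin m) (Fin q × Fin g) ℝ)
    (a : Fin q × Fin g → ℝ) (lam α γ : ℝ)
    (hlam : 0 < lam ∧ lam < 1)
    -- support structure of `a`: block `k`-sparse, `s`-sparse blocks, active set the
    -- first `s` entries of each of the first `k` groups, with exactly `s` nonzeros
    (hsupp : ∀ x : Fin q × Fin g, a x ≠ 0 → ((x.1 : ℕ) < k ∧ (x.2 : ℕ) < s))
    (hexact : ∀ G : Fin q, (G : ℕ) < k → Nat.card {b : Fin g // a (G, b) ≠ 0} = s)
    -- the columns of the active groups are linearly independent
    (hindep : LinearIndependent ℝ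
      (fun j : {x : Fin q × Fin g // (x.1 : ℕ) < k} => fun i : Fin m => D i j.val))
    -- submatrices of `D`: active entries `S₀`, inactive entries of active groups `T₀`,
    -- inactive groups `Ḡ₀`
    (DS : Matrix (Fin m) {x : Fin q × Fin g // (x.1 : ℕ) < k ∧ (x.2 : ℕ) < s} ℝ)
    (hDS : DS = Matrix.of fun i x => D i x.val)
    (DT : Matrix (Fin m) {x : Fin q × Fin g // (x.1 : ℕ) < k ∧ s ≤ (x.2 : ℕ)} ℝ)
    (hDT : DT = Matrix.of fun i x => D i x.val)
    (DGc : Matrix (Fin m) {x : Fin q × Fin g // k ≤ (x.1 : ℕ)} ℝ)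
    (hDGc : DGc = Matrix.of fun i x => D i x.val)
    -- `P` is the orthogonal projector onto the range of `D_{T₀}`
    (P : Matrix (Fin m) (Fin m) ℝ)
    (hPsymm : P.transpose = P) (hPidem : P * P = P) (hPT : P * DT = DT)
    (hPrange : ∀ i : Fin m, (fun r => P r i) ∈
      Submodule.span ℝ (Set.range fun j : {x : Fin q × Fin g // (x.1 : ℕ) < k ∧ s ≤ (x.2 : ℕ)} =>
        fun r : Fin m => DT r j))
    -- Moore–Penrose pseudo-inverse `H` and oblique pseudo-inverse `Q`
    (hHinv : IsUnit (DS.transpose * DS))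
    (H : Matrix {x : Fin q × Fin g // (x.1 : ℕ) < k ∧ (x.2 : ℕ) < s} (Fin m) ℝ)
    (hH : H = (DS.transpose * DS)⁻¹ * DS.transpose)
    (hQinv : IsUnit (DS.transpose * (1 - P) * DS))
    (Q : Matrix {x : Fin q × Fin g // (x.1 : ℕ) < k ∧ (x.2 : ℕ) < s} (Fin m) ℝ)
    (hQ : Q = (DS.transpose * (1 - P) * DS)⁻¹ * (DS.transpose * (1 - P)))
    -- conditions (i)–(iii)
    (hα : α ≤ 1)
    (hcond1 : rhoc (Q * DGc) (fun x => x.val.1) (fun x => x.val.1) < α)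
    (hγ : γ ≤ 1 + lam * (1 - α) / (Real.sqrt (g : ℝ) * (1 - lam)))
    (hcond2 : norm11 (H * DGc) < γ)
    (hcond3 : norm11 (H * DT) < 1) :
    ∀ a' : Fin q × Fin g → ℝ, a' ≠ a → D.mulVec a' = D.mulVec a →
      lam * psiG a + (1 - lam) * l1 a < lam * psiG a' + (1 - lam) * l1 a' := by
  intro a' hne heq
  obtain ⟨hlam0, hlam1⟩ := hlam
  classical
  set δ : Fin q × Fin g → ℝ := fun x => a' x - a x with hδ
  have ha0 : ∀ x : Fin q × Fin g, ¬((x.1 : ℕ) < k ∧ (x.2 : ℕ) < s) → a x = 0 := by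
    intro x hx; by_contra h; exact hx (hsupp x h)
  -- the three restricted difference vectors
  -- zero equation
  have hzero : DS.mulVec (fun x => δ x.val) + DT.mulVec (fun x => δ x.val) +
      DGc.mulVec (fun x => δ x.val) = 0 := by
    funext i
    have hd : DS.mulVec (fun x => δ x.val) i + DT.mulVec (fun x => δ x.val) i +
        DGc.mulVec (fun x => δ x.val) i = D.mulVec δ i := by
      simp only [Matrix.mulVec, dotProduct, hDS, hDT, hDGc, Matrix.of_apply]
      exact (sum_split (k := k) (s := s) (fun x => D i x * δ x)).symm
    have hD0 : D.mulVec δ = 0 := by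
      have h1 : δ = a' - a := rfl
      rw [h1, Matrix.mulVec_sub, heq, sub_self]
    simp only [Pi.add_apply, Pi.zero_apply]
    rw [hd, hD0]
    rfl
  -- matrix identities
  have hQDS : Q * DS = 1 := by
    have hinv := Matrix.nonsing_inv_mul _ ((Matrix.isUnit_iff_isUnit_det _).mp hQinv)
    calc Q * DS = (DS.transpose * (1 - P) * DS)⁻¹ * (DS.transpose * (1 - P) * DS) := by
          rw [hQ, Matrix.mul_assoc ((DS.transpose * (1 - P) * DS)⁻¹) (DS.transpose * (1 - P)) DS]
      _ = 1 := hinv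
  have hHDS : H * DS = 1 := by
    have hinv := Matrix.nonsing_inv_mul _ ((Matrix.isUnit_iff_isUnit_det _).mp hHinv)
    calc H * DS = (DS.transpose * DS)⁻¹ * (DS.transpose * DS) := by
          rw [hH, Matrix.mul_assoc ((DS.transpose * DS)⁻¹) DS.transpose DS]
      _ = 1 := hinv
  have h1P : (1 - P) * DT = 0 := by rw [Matrix.sub_mul, Matrix.one_mul, hPT, sub_self]
  have hQDT : Q * DT = 0 := by
    rw [hQ, Matrix.mul_assoc ((DS.transpose * (1 - P) * DS)⁻¹) (DS.transpose * (1 - P)) DT,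
      Matrix.mul_assoc DS.transpose (1 - P) DT, h1P, Matrix.mul_zero, Matrix.mul_zero]
  -- the two representations of δS
  have happQ : (fun x : {x : Fin q × Fin g // (x.1 : ℕ) < k ∧ (x.2 : ℕ) < s} => δ x.val) +
      (Q * DGc).mulVec (fun x => δ x.val) = 0 := by
    have h := congrArg Q.mulVec hzero
    rwa [Matrix.mulVec_add, Matrix.mulVec_add, Matrix.mulVec_mulVec, Matrix.mulVec_mulVec,
      Matrix.mulVec_mulVec, hQDS, hQDT, Matrix.one_mulVec, Matrix.zero_mulVec, add_zero,
      Matrix.mulVec_zero] at h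
  have happH : ((fun x : {x : Fin q × Fin g // (x.1 : ℕ) < k ∧ (x.2 : ℕ) < s} => δ x.val) +
      (H * DT).mulVec (fun x => δ x.val)) + (H * DGc).mulVec (fun x => δ x.val) = 0 := by
    have h := congrArg H.mulVec hzero
    rwa [Matrix.mulVec_add, Matrix.mulVec_add, Matrix.mulVec_mulVec, Matrix.mulVec_mulVec,
      Matrix.mulVec_mulVec, hHDS, Matrix.one_mulVec, Matrix.mulVec_zero] at h
  -- pointwise forms of the two representations
  have hptQ : ∀ x : {x : Fin q × Fin g // (x.1 : ℕ) < k ∧ (x.2 : ℕ) < s},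
      δ x.val = -((Q * DGc).mulVec (fun y : {y : Fin q × Fin g // k ≤ (y.1 : ℕ)} => δ y.val) x) := by
    intro x
    have h := congrFun happQ x
    simp only [Pi.add_apply, Pi.zero_apply] at h
    linarith
  have hptH : ∀ x : {x : Fin q × Fin g // (x.1 : ℕ) < k ∧ (x.2 : ℕ) < s},
      δ x.val = -((H * DT).mulVec
          (fun y : {y : Fin q × Fin g // (y.1 : ℕ) < k ∧ s ≤ (y.2 : ℕ)} => δ y.val) x +
        (H * DGc).mulVec (fun y : {y : Fin q × Fin g // k ≤ (y.1 : ℕ)} => δ y.val) x) := by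
    intro x
    have h := congrFun happH x
    simp only [Pi.add_apply, Pi.zero_apply] at h
    linarith
  -- the basic quantities
  set A := l1 (fun x : {x : Fin q × Fin g // (x.1 : ℕ) < k ∧ (x.2 : ℕ) < s} => δ x.val) with hAdef
  set B := l1 (fun x : {x : Fin q × Fin g // (x.1 : ℕ) < k ∧ s ≤ (x.2 : ℕ)} => δ x.val) with hBdef
  set C := l1 (fun x : {x : Fin q × Fin g // k ≤ (x.1 : ℕ)} => δ x.val) with hCdef
  set c := ∑ F : Fin q, l2 (fun x : {x : {x : Fin q × Fin g // k ≤ (x.1 : ℕ)} // x.val.1 = F} =>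
    δ x.val.val) with hcdef
  set σ := ∑ E : Fin q,
    l2 (fun x : {x : {x : Fin q × Fin g // (x.1 : ℕ) < k ∧ (x.2 : ℕ) < s} // x.val.1 = E} =>
      δ x.val.val) with hsdef
  have hc0 : 0 ≤ c := by rw [hcdef]; exact Finset.sum_nonneg fun _ _ => l2_nonneg _
  have hA0 : 0 ≤ A := by rw [hAdef]; exact l1_nonneg _
  have hB0 : 0 ≤ B := by rw [hBdef]; exact l1_nonneg _
  have hC0 : 0 ≤ C := by rw [hCdef]; exact l1_nonneg _
  -- (i): block bound
  have hσc : σ ≤ rhoc (Q * DGc) (fun x => x.val.1) (fun x => x.val.1) * c := by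
    have hrb := rhoc_bound (Q * DGc)
      (fun x : {x : Fin q × Fin g // (x.1 : ℕ) < k ∧ (x.2 : ℕ) < s} => x.val.1)
      (fun x : {x : Fin q × Fin g // k ≤ (x.1 : ℕ)} => x.val.1)
      (fun x => δ x.val)
    have heq2 : σ = ∑ E : Fin q,
        l2 (fun i : {i : {x : Fin q × Fin g // (x.1 : ℕ) < k ∧ (x.2 : ℕ) < s} // i.val.1 = E} =>
          (Q * DGc).mulVec (fun x : {x : Fin q × Fin g // k ≤ (x.1 : ℕ)} => δ x.val) i.val) := by
      rw [hsdef]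
      apply Finset.sum_congr rfl
      intro E _
      have h1 : (fun i : {i : {x : Fin q × Fin g // (x.1 : ℕ) < k ∧ (x.2 : ℕ) < s} //
            i.val.1 = E} =>
          (Q * DGc).mulVec (fun x : {x : Fin q × Fin g // k ≤ (x.1 : ℕ)} => δ x.val) i.val) =
          fun i : {i : {x : Fin q × Fin g // (x.1 : ℕ) < k ∧ (x.2 : ℕ) < s} // i.val.1 = E} =>
            -(δ i.val.val) := by
        funext i
        have h := hptQ i.val
        linarith
      rw [h1, l2_neg]
    rw [heq2, hcdef]
    exact hrb
  -- (ii)+(iii): l1 bound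
  have hAle : A ≤ B + γ * C := by
    have h1 : A ≤ l1 ((H * DT).mulVec
          (fun y : {y : Fin q × Fin g // (y.1 : ℕ) < k ∧ s ≤ (y.2 : ℕ)} => δ y.val)) +
        l1 ((H * DGc).mulVec (fun y : {y : Fin q × Fin g // k ≤ (y.1 : ℕ)} => δ y.val)) := by
      rw [hAdef]
      unfold l1
      rw [← Finset.sum_add_distrib]
      apply Finset.sum_le_sum
      intro x _
      change |δ x.val| ≤ _
      rw [hptH x, abs_neg]
      exact abs_add_le _ _
    have h3 := norm11_bound (H * DT)
      (fun y : {y : Fin q × Fin g // (y.1 : ℕ) < k ∧ s ≤ (y.2 : ℕ)} => δ y.val)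
    have h4 := norm11_bound (H * DGc)
      (fun y : {y : Fin q × Fin g // k ≤ (y.1 : ℕ)} => δ y.val)
    have h5 : norm11 (H * DT) * B ≤ 1 * B :=
      mul_le_mul_of_nonneg_right hcond3.le hB0
    have h6 : norm11 (H * DGc) * C ≤ γ * C :=
      mul_le_mul_of_nonneg_right hcond2.le hC0
    rw [← hBdef] at h3
    rw [← hCdef] at h4
    linarith
  -- l1 ≤ sqrt g * block-l2 on the inactive groups
  have hCc : C ≤ Real.sqrt g * c := by
    have hfib : C = ∑ F : Fin q,
        ∑ x : {x : {x : Fin q × Fin g // k ≤ (x.1 : ℕ)} // x.val.1 = F}, |δ x.val.val| := by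
      rw [hCdef]
      exact (Fintype.sum_fiberwise (fun x : {x : Fin q × Fin g // k ≤ (x.1 : ℕ)} => x.val.1)
        (fun x : {x : Fin q × Fin g // k ≤ (x.1 : ℕ)} => |δ x.val|)).symm
    rw [hfib, hcdef, Finset.mul_sum]
    apply Finset.sum_le_sum
    intro F _
    have hcard : ((Fintype.card
        {x : {x : Fin q × Fin g // k ≤ (x.1 : ℕ)} // x.val.1 = F} : ℕ) : ℝ) ≤ (g : ℝ) := by
      have hinj : Function.Injective
          (fun x : {x : {x : Fin q × Fin g // k ≤ (x.1 : ℕ)} // x.val.1 = F} => x.val.val.2) := by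
        intro x y hxy
        apply Subtype.ext; apply Subtype.ext
        have hx := x.prop; have hy := y.prop
        have h1 : x.val.val.1 = y.val.val.1 := by rw [hx, hy]
        exact Prod.ext h1 hxy
      have h2 := Fintype.card_le_of_injective _ hinj
      simp only [Fintype.card_fin] at h2
      exact_mod_cast h2
    have h := l1_le_sqrt_card_mul_l2
      (fun x : {x : {x : Fin q × Fin g // k ≤ (x.1 : ℕ)} // x.val.1 = F} => δ x.val.val)
    have h2 : Real.sqrt (Fintype.card
        {x : {x : Fin q × Fin g // k ≤ (x.1 : ℕ)} // x.val.1 = F}) ≤ Real.sqrt g :=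
      Real.sqrt_le_sqrt hcard
    calc (∑ x : {x : {x : Fin q × Fin g // k ≤ (x.1 : ℕ)} // x.val.1 = F}, |δ x.val.val|)
        ≤ Real.sqrt (Fintype.card
            {x : {x : Fin q × Fin g // k ≤ (x.1 : ℕ)} // x.val.1 = F}) *
          l2 (fun x : {x : {x : Fin q × Fin g // k ≤ (x.1 : ℕ)} // x.val.1 = F} =>
            δ x.val.val) := h
      _ ≤ Real.sqrt g * l2 (fun x : {x : {x : Fin q × Fin g // k ≤ (x.1 : ℕ)} // x.val.1 = F} =>
            δ x.val.val) := mul_le_mul_of_nonneg_right h2 (l2_nonneg _)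
  -- group-regularizer inequality
  have hψ : psiG a + (c - σ) ≤ psiG a' := by
    rw [hcdef, hsdef]
    have h := Finset.sum_le_sum
      (fun E (_ : E ∈ (Finset.univ : Finset (Fin q))) =>
        per_E (k := k) (s := s) a a' δ (fun x => rfl) ha0 E)
    rw [Finset.sum_add_distrib, Finset.sum_sub_distrib] at h
    unfold psiG
    exact h
  -- l1 inequality
  have hl1 : l1 a + (B + C - A) ≤ l1 a' := by
    have hs' := sum_split (k := k) (s := s) (fun x => |a' x|)
    have hsa := sum_split (k := k) (s := s) (fun x => |a x|)
    have hT0 : ∀ x : {x : Fin q × Fin g // (x.1 : ℕ) < k ∧ s ≤ (x.2 : ℕ)}, a x.val = 0 :=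
      fun x => ha0 x.val (by have h := x.prop; omega)
    have hG0 : ∀ x : {x : Fin q × Fin g // k ≤ (x.1 : ℕ)}, a x.val = 0 :=
      fun x => ha0 x.val (by have h := x.prop; omega)
    have eT : (∑ x : {x : Fin q × Fin g // (x.1 : ℕ) < k ∧ s ≤ (x.2 : ℕ)}, |a' x.val|) = B := by
      rw [hBdef]
      apply Finset.sum_congr rfl
      intro x _
      have hd : δ x.val = a' x.val := by
        show a' x.val - a x.val = a' x.val
        rw [hT0 x]; ring
      show |a' x.val| = |δ x.val|
      rw [hd]
    have eG : (∑ x : {x : Fin q × Fin g // k ≤ (x.1 : ℕ)}, |a' x.val|) = C := by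
      rw [hCdef]
      apply Finset.sum_congr rfl
      intro x _
      have hd : δ x.val = a' x.val := by
        show a' x.val - a x.val = a' x.val
        rw [hG0 x]; ring
      show |a' x.val| = |δ x.val|
      rw [hd]
    have eTa : (∑ x : {x : Fin q × Fin g // (x.1 : ℕ) < k ∧ s ≤ (x.2 : ℕ)}, |a x.val|) = 0 :=
      Finset.sum_eq_zero fun x _ => by rw [hT0 x, abs_zero]
    have eGa : (∑ x : {x : Fin q × Fin g // k ≤ (x.1 : ℕ)}, |a x.val|) = 0 :=
      Finset.sum_eq_zero fun x _ => by rw [hG0 x, abs_zero]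
    have eS : (∑ x : {x : Fin q × Fin g // (x.1 : ℕ) < k ∧ (x.2 : ℕ) < s}, |a x.val|) - A ≤
        ∑ x : {x : Fin q × Fin g // (x.1 : ℕ) < k ∧ (x.2 : ℕ) < s}, |a' x.val| := by
      rw [hAdef]
      show _ - l1 _ ≤ _
      unfold l1
      rw [← Finset.sum_sub_distrib]
      apply Finset.sum_le_sum
      intro x _
      have h := abs_sub_abs_le_abs_sub (a x.val) (a' x.val)
      have h2 : |a x.val - a' x.val| = |δ x.val| := by
        show _ = |a' x.val - a x.val|
        rw [abs_sub_comm]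
      linarith
    have g1 : l1 a' = _ := hs'
    have g2 : l1 a = _ := hsa
    linarith
  -- final assembly
  have hm1 : lam * (psiG a + (c - σ)) ≤ lam * psiG a' := mul_le_mul_of_nonneg_left hψ hlam0.le
  have hm2 : (1 - lam) * (l1 a + (B + C - A)) ≤ (1 - lam) * l1 a' :=
    mul_le_mul_of_nonneg_left hl1 (by linarith)
  have hkey : 0 < lam * (c - σ) + (1 - lam) * (B + C - A) := by
    rcases eq_or_lt_of_le hc0 with hc | hc
    · -- the inactive groups of δ vanish
      have hsum0 : (∑ F : Fin q,
          l2 (fun x : {x : {x : Fin q × Fin g // k ≤ (x.1 : ℕ)} // x.val.1 = F} =>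
            δ x.val.val)) = 0 := by
        rw [← hcdef]; exact hc.symm
      have hFz : ∀ F : Fin q,
          l2 (fun x : {x : {x : Fin q × Fin g // k ≤ (x.1 : ℕ)} // x.val.1 = F} =>
            δ x.val.val) = 0 := fun F =>
        (Finset.sum_eq_zero_iff_of_nonneg (fun F _ => l2_nonneg _)).mp hsum0 F
          (Finset.mem_univ F)
      have hGz : ∀ x : {x : Fin q × Fin g // k ≤ (x.1 : ℕ)}, δ x.val = 0 := by
        intro x
        exact l2_eq_zero (hFz x.val.1) ⟨x, rfl⟩
      have hSz : ∀ x : {x : Fin q × Fin g // (x.1 : ℕ) < k ∧ (x.2 : ℕ) < s}, δ x.val = 0 := by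
        intro x
        have h := congrFun happQ x
        simp only [Pi.add_apply, Pi.zero_apply] at h
        have hz : (Q * DGc).mulVec
            (fun y : {y : Fin q × Fin g // k ≤ (y.1 : ℕ)} => δ y.val) x = 0 := by
          unfold Matrix.mulVec dotProduct
          apply Finset.sum_eq_zero
          intro j _
          change _ * δ j.val = 0
          rw [hGz j, mul_zero]
        linarith
      have hσz : σ = 0 := by
        rw [hsdef]
        apply Finset.sum_eq_zero
        intro E _
        have hz : (fun x : {x : {x : Fin q × Fin g // (x.1 : ℕ) < k ∧ (x.2 : ℕ) < s} //
            x.val.1 = E} => δ x.val.val) = fun _ => (0:ℝ) :=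
          funext fun x => hSz x.val
        rw [hz]; simp [l2]
      have hAz : A = 0 := by
        rw [hAdef]; unfold l1
        exact Finset.sum_eq_zero fun x _ => by
          show |δ x.val| = (0:ℝ); rw [hSz x, abs_zero]
      have hCz : C = 0 := by
        rw [hCdef]; unfold l1
        exact Finset.sum_eq_zero fun x _ => by
          show |δ x.val| = (0:ℝ); rw [hGz x, abs_zero]
      have hBpos : 0 < B := by
        rcases lt_or_eq_of_le hB0 with h | h
        · exact h
        · exfalso
          have hTz : ∀ x : {x : Fin q × Fin g // (x.1 : ℕ) < k ∧ s ≤ (x.2 : ℕ)},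
              δ x.val = 0 := by
            intro x
            have h0 : ∑ x : {x : Fin q × Fin g // (x.1 : ℕ) < k ∧ s ≤ (x.2 : ℕ)},
                |δ x.val| = 0 := by
              rw [hBdef] at h; exact h.symm
            have := (Finset.sum_eq_zero_iff_of_nonneg
              (fun x _ => abs_nonneg _)).mp h0 x (Finset.mem_univ x)
            exact abs_eq_zero.mp this
          apply hne
          funext x
          have hδx : δ x = 0 := by
            by_cases h1 : (x.1 : ℕ) < k ∧ (x.2 : ℕ) < s
            · exact hSz ⟨x, h1⟩
            · by_cases h2 : (x.1 : ℕ) < k ∧ s ≤ (x.2 : ℕ)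
              · exact hTz ⟨x, h2⟩
              · exact hGz ⟨x, by omega⟩
          have hx : a' x - a x = 0 := hδx
          linarith
      rw [← hc, hσz, hAz, hCz]
      nlinarith [mul_pos (show (0:ℝ) < 1 - lam by linarith) hBpos]
    · -- c > 0
      have hσlt : σ < α * c := lt_of_le_of_lt hσc (mul_lt_mul_of_pos_right hcond1 hc)
      rcases le_or_gt γ 1 with hγ1 | hγ1
      · have h1 : 0 < lam * (c - σ) :=
          mul_pos hlam0 (by nlinarith [mul_nonneg (sub_nonneg.mpr hα) hc.le])
        have h2 : 0 ≤ (1 - lam) * (B + C - A) :=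
          mul_nonneg (by linarith)
            (by nlinarith [hAle, mul_nonneg (sub_nonneg.mpr hγ1) hC0])
        linarith
      · have hd0 : 0 ≤ Real.sqrt g * (1 - lam) :=
          mul_nonneg (Real.sqrt_nonneg _) (by linarith)
        rcases eq_or_lt_of_le hd0 with hd | hd
        · exfalso
          rw [← hd, div_zero, add_zero] at hγ
          linarith
        · have hkey2 : (γ - 1) * (Real.sqrt g * (1 - lam)) ≤ lam * (1 - α) :=
            (le_div_iff₀ hd).mp (by linarith)
          have e1 : lam * σ < lam * (α * c) := by
            exact mul_lt_mul_of_pos_left hσlt hlam0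
          have e2 : (1 - lam) * A ≤ (1 - lam) * (B + γ * C) :=
            mul_le_mul_of_nonneg_left hAle (by linarith)
          have e3 : ((γ - 1) * (1 - lam)) * C ≤ ((γ - 1) * (1 - lam)) * (Real.sqrt g * c) :=
            mul_le_mul_of_nonneg_left hCc (mul_nonneg (by linarith) (by linarith))
          have e4 : ((γ - 1) * (Real.sqrt g * (1 - lam))) * c ≤ (lam * (1 - α)) * c :=
            mul_le_mul_of_nonneg_right hkey2 hc.le
          nlinarith [e1, e2, e3, e4]
  nlinarith [hm1, hm2, hkey]
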